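/- For any θ, θ' ∈ Θ, the biased densities satisfy the total variation bound ‖π_θ dλ − π_{θ'} dλ‖_TV ≤ 2(d−1) Σ_{i=1}^d |1 − θ'(i)/θ(i)|. -/

import Mathlib

open MeasureTheory ProbabilityTheory Filter Set Asymptotics
open scoped ENNReal NNReal Topology ENat

noncomputable section

/-- The weight `θ⋆(i) = ∫_{X_i} π dλ` of the stratum `X_i = idx⁻¹{i}`. -/
def thetaStarW {E : Type*} [MeasurableSpace E] (lam : Measure E) (pdf : E → ℝ)
    {d : ℕ} (idx : E → Fin d) (i : Fin d) : ℝ :=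
  ∫ x in idx ⁻¹' {i}, pdf x ∂lam

/-- The open simplex `Θ` of non-degenerate probability vectors on `{1,…,d}`. -/
def simplexInt (d : ℕ) : Set (Fin d → ℝ) :=
  {t | (∀ i, 0 < t i ∧ t i < 1) ∧ ∑ i, t i = 1}

/-- The biased density `π_θ(x) = (∑ᵢ θ⋆(i)/θ(i))⁻¹ ∑ᵢ (π(x)/θ(i)) 1_{X_i}(x)`. -/
def piB {E : Type*} [MeasurableSpace E] (lam : Measure E) (pdf : E → ℝ)
    {d : ℕ} (idx : E → Fin d) (t : Fin d → ℝ) (x : E) : ℝ :=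
  (∑ i, thetaStarW lam pdf idx i / t i)⁻¹ *
    ∑ i, (pdf x / t i) * (if idx x = i then 1 else 0)

/-- `P` is the symmetric Metropolis-Hastings kernel with proposal density `q`
and target density `pB` with respect to `lam`:
`P(x,dy) = q(x,y) α(x,y) λ(dy) + δ_x(dy) (1 - ∫ q(x,z) α(x,z) λ(dz))`
where `α(x,y) = 1 ∧ (pB(y)/pB(x))`. -/
def IsMHKernel {E : Type*} [MeasurableSpace E] (lam : Measure E) (q : E → E → ℝ)
    (pB : E → ℝ) (P : Kernel E E) : Prop :=
  ∀ x : E, P x =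
    lam.withDensity (fun y => ENNReal.ofReal (q x y * min 1 (pB y / pB x)))
      + (ENNReal.ofReal (1 - ∫ z, q x z * min 1 (pB z / pB x) ∂lam)) • Measure.dirac x

/-- The σ-algebra `F_n = σ(θ₀, X₀, …, X_n)`. -/
def wlSigma {E Ω : Type*} [MeasurableSpace E] {d : ℕ}
    (X : ℕ → Ω → E) (θ : ℕ → Ω → Fin d → ℝ) (n : ℕ) : MeasurableSpace Ω :=
  MeasurableSpace.comap (θ 0) MeasurableSpace.pi ⊔
    ⨆ k ≤ n, MeasurableSpace.comap (X k) ‹MeasurableSpace E›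

/-- The field `H_i(x,θ) = θ(i) (1_{X_i}(x) - θ(I(x)))`. -/
def Hfield {E : Type*} {d : ℕ} (idx : E → Fin d) (x : E) (t : Fin d → ℝ) (i : Fin d) : ℝ :=
  t i * ((if idx x = i then 1 else 0) - t (idx x))

/-- The mean field `h(θ) = ∫ H(x,θ) π_θ(x) λ(dx)`. -/
def meanField {E : Type*} [MeasurableSpace E] (lam : Measure E) (pdf : E → ℝ)
    {d : ℕ} (idx : E → Fin d) (t : Fin d → ℝ) : Fin d → ℝ :=
  fun i => ∫ x, Hfield idx x t i * piB lam pdf idx t x ∂lam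

/-- `i` is the smallest index of a stratum of smallest weight, `i = I_n`. -/
def isLeastMin {d : ℕ} (v : Fin d → ℝ) (i : Fin d) : Prop :=
  (∀ j, v i ≤ v j) ∧ ∀ i', (∀ j, v i' ≤ v j) → i ≤ i'

/-- The successive return times `T_k` of the chain to the stratum of smallest
weight: `T_0 = 0`, `T_k = inf {n > T_{k-1} : X_n ∈ X_{I_n}}` (`= ∞` if empty). -/
def retTime {E Ω : Type*} {d : ℕ} (idx : E → Fin d)
    (X : ℕ → Ω → E) (θ : ℕ → Ω → Fin d → ℝ) : ℕ → Ω → ℕ∞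
  | 0 => fun _ => 0
  | (k+1) => fun ω => sInf {m : ℕ∞ | ∃ n : ℕ, m = (n : ℕ∞) ∧
      retTime idx X θ k ω < (n : ℕ∞) ∧ isLeastMin (θ n ω) (idx (X n ω))}

/-- The (0-based) largest index `i_m - 1` such that the `i_m` smallest weights of `w`
are `< (min_j w(j)) (1+γ₁)/(1-γ₁)`; the increasing reordering `(1)_m, …, (d)_m`
of the weights is realised through the sorting permutation `Tuple.sort w`. -/
def imax0 {d : ℕ} (γ1 : ℝ) (w : Fin d → ℝ) : ℕ :=
  sSup {j : ℕ | ∃ h : j < d, w (Tuple.sort w ⟨j, h⟩) < (⨅ i, w i) * (1 + γ1) / (1 - γ1)}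

/-- The event `A_m = {X_{s+md+1} ∈ X_{(i_m)_m}, X_{s+md+2} ∈ X_{(i_m-1)_m}, …,
X_{s+md+i_m} ∈ X_{(1)_m}}`, where `s = T_k` and `(j)_m` is the increasing
reordering of the weights at time `s + md`. -/
def eventA {E Ω : Type*} {d : ℕ} (idx : E → Fin d) (X : ℕ → Ω → E)
    (θ : ℕ → Ω → Fin d → ℝ) (γ1 : ℝ) (s : Ω → ℕ) (m : ℕ) : Set Ω :=
  {ω | ∀ t : ℕ, t ≤ imax0 γ1 (θ (s ω + m * d) ω) →
    ∀ h : imax0 γ1 (θ (s ω + m * d) ω) - t < d,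
    idx (X (s ω + m * d + 1 + t) ω) =
      Tuple.sort (θ (s ω + m * d) ω) ⟨imax0 γ1 (θ (s ω + m * d) ω) - t, h⟩}

/-- Iterates `P^n` of a Markov kernel. -/
def kIter {E : Type*} [MeasurableSpace E] (κ : Kernel E E) : ℕ → Kernel E E
  | 0 => Kernel.id
  | (n+1) => κ ∘ₖ kIter κ n

/-- The Poisson solution `Ĥ_θ⋆ = ∑_{n≥0} P_θ⋆ⁿ (H(·,θ⋆) - h(θ⋆))`. -/
def poissonH {E : Type*} [MeasurableSpace E] (lam : Measure E) (pdf : E → ℝ)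
    {d : ℕ} (idx : E → Fin d) (P : (Fin d → ℝ) → Kernel E E) (x : E) (i : Fin d) : ℝ :=
  ∑' n : ℕ, ∫ y, (Hfield idx y (thetaStarW lam pdf idx) i
      - meanField lam pdf idx (thetaStarW lam pdf idx) i)
    ∂(kIter (P (thetaStarW lam pdf idx)) n x)

/-- The asymptotic variance-covariance matrix `U⋆`. -/
def Ustar {E : Type*} [MeasurableSpace E] (lam : Measure E) (pdf : E → ℝ)
    {d : ℕ} (idx : E → Fin d) (P : (Fin d → ℝ) → Kernel E E) (i j : Fin d) : ℝ :=
  ∫ x, (poissonH lam pdf idx P x i * poissonH lam pdf idx P x j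
      - (∫ y, poissonH lam pdf idx P y i ∂(P (thetaStarW lam pdf idx) x)) *
        (∫ y, poissonH lam pdf idx P y j ∂(P (thetaStarW lam pdf idx) x)))
    * piB lam pdf idx (thetaStarW lam pdf idx) x ∂lam

/-- Convergence in distribution of real random variables, expressed through
expectations of bounded continuous functions. -/
def CvgInDist {Ω : Type*} [MeasurableSpace Ω] (Pr : Measure Ω)
    (Z : ℕ → Ω → ℝ) (ν : Measure ℝ) : Prop :=
  ∀ g : ℝ → ℝ, Continuous g → (∃ C, ∀ x, |g x| ≤ C) →
    Tendsto (fun n => ∫ ω, g (Z n ω) ∂Pr) atTop (𝓝 (∫ x, g x ∂ν))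


open Finset in
private lemma wl_key_alg {d : ℕ} (hd : 2 ≤ d) (w a t t' : Fin d → ℝ)
    (hw : ∀ i, 0 < w i) (ha : ∀ i, |a i| ≤ w i)
    (ht : ∀ i, 0 < t i) (ht' : ∀ i, 0 < t' i) :
    |(∑ i, w i / t i)⁻¹ * ∑ i, a i / t i
      - (∑ i, w i / t' i)⁻¹ * ∑ i, a i / t' i|
      ≤ 2 * ((d : ℝ) - 1) * ∑ i, |1 - t' i / t i| := by
  have hne : (Finset.univ : Finset (Fin d)).Nonempty :=
    ⟨⟨0, by omega⟩, Finset.mem_univ _⟩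
  have hd1 : (1 : ℝ) ≤ (d : ℝ) - 1 := by
    have : (2 : ℝ) ≤ (d : ℝ) := by exact_mod_cast hd
    linarith
  set S : ℝ := ∑ i, w i / t i with hS
  set S' : ℝ := ∑ i, w i / t' i with hS'
  set A₁ : ℝ := ∑ i, a i / t i with hA₁
  set A₂ : ℝ := ∑ i, a i / t' i with hA₂
  set ε : Fin d → ℝ := fun i => |1 - t' i / t i| with hε
  have hSpos : 0 < S := Finset.sum_pos (fun i _ => div_pos (hw i) (ht i)) hne
  have hS'pos : 0 < S' := Finset.sum_pos (fun i _ => div_pos (hw i) (ht' i)) hne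
  have hεnn : ∀ i, 0 ≤ ε i := fun i => abs_nonneg _
  have hεsum : 0 ≤ ∑ i, ε i := Finset.sum_nonneg fun i _ => hεnn i
  rcases le_total 1 (((d : ℝ) - 1) * ∑ i, ε i) with hcase | hcase
  · -- trivial case : LHS ≤ 2 ≤ RHS
    have key : ∀ (u : Fin d → ℝ), (∀ i, 0 < u i) →
        |(∑ i, w i / u i)⁻¹ * ∑ i, a i / u i| ≤ 1 := by
      intro u hu
      have hSu : 0 < ∑ i, w i / u i :=
        Finset.sum_pos (fun i _ => div_pos (hw i) (hu i)) hne
      rw [abs_mul, abs_of_nonneg (inv_nonneg.mpr hSu.le)]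
      rw [← inv_mul_cancel₀ hSu.ne']
      gcongr
      calc |∑ i, a i / u i| ≤ ∑ i, |a i / u i| := Finset.abs_sum_le_sum_abs _ _
        _ ≤ ∑ i, w i / u i := Finset.sum_le_sum fun i _ => by
            rw [abs_div, abs_of_pos (hu i)]
            exact (div_le_div_iff_of_pos_right (hu i)).mpr (ha i)
    calc |S⁻¹ * A₁ - S'⁻¹ * A₂| ≤ |S⁻¹ * A₁| + |S'⁻¹ * A₂| := abs_sub _ _
      _ ≤ 1 + 1 := add_le_add (key t ht) (key t' ht')
      _ ≤ 2 * (((d : ℝ) - 1) * ∑ i, ε i) := by linarith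
      _ = 2 * ((d : ℝ) - 1) * ∑ i, ε i := by ring
  · -- main case : (d-1) * Σε ≤ 1
    set b : Fin d → ℝ := fun i => w i / t' i with hb
    set r : Fin d → ℝ := fun i => t' i / t i with hr
    have hbpos : ∀ i, 0 < b i := fun i => div_pos (hw i) (ht' i)
    have hS'b : S' = ∑ i, b i := rfl
    have hSr : S = ∑ i, r i * b i := by
      apply Finset.sum_congr rfl
      intro i _
      simp only [hr, hb]
      field_simp
      exact (mul_div_mul_right _ _ (ht' i).ne').symm
    have hrε : ∀ i, 1 - ε i ≤ r i := by
      intro i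
      simp only [hε, hr]
      linarith [le_abs_self (1 - t' i / t i)]
    obtain ⟨k, -, hk⟩ := Finset.exists_max_image Finset.univ b hne
    have hkmax : ∀ j, b j ≤ b k := fun j => hk j (Finset.mem_univ j)
    have hbkS' : b k ≤ S' := by
      rw [hS'b]
      exact Finset.single_le_sum (fun j _ => (hbpos j).le) (Finset.mem_univ k)
    have hSlb : S' - b k * ∑ i, ε i ≤ S := by
      rw [hSr, hS'b]
      have h1 : ∑ i, ε i * b i ≤ b k * ∑ i, ε i := by
        rw [Finset.mul_sum]
        exact Finset.sum_le_sum fun i _ => by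
          rw [mul_comm (b k)]
          exact mul_le_mul_of_nonneg_left (hkmax i) (hεnn i)
      have h2 : ∑ i, (1 - ε i) * b i ≤ ∑ i, r i * b i :=
        Finset.sum_le_sum fun i _ => mul_le_mul_of_nonneg_right (hrε i) (hbpos i).le
      have h3 : ∑ i, (1 - ε i) * b i = ∑ i, b i - ∑ i, ε i * b i := by
        rw [← Finset.sum_sub_distrib]
        exact Finset.sum_congr rfl fun i _ => by ring
      linarith
    have hdS : ((d : ℝ) - 1) * S' - b k ≤ ((d : ℝ) - 1) * S := by
      have : b k * (((d : ℝ) - 1) * ∑ i, ε i) ≤ b k * 1 :=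
        mul_le_mul_of_nonneg_left hcase (hbpos k).le
      nlinarith [hbpos k]
    have claim : ∀ i, b i * (S' - b i) ≤ ((d : ℝ) - 1) * (S * S') := by
      intro i
      have hd2 : (0 : ℝ) ≤ (d : ℝ) - 2 := by linarith
      have hstep : b i * (S' - b i) ≤ (((d : ℝ) - 1) * S' - b k) * S' := by
        rcases eq_or_ne i k with rfl | hik
        · nlinarith [sq_nonneg (S' - b i), mul_nonneg hd2 (sq_nonneg S')]
        · have hik2 : b i + b k ≤ S' := by
            rw [hS'b]
            calc b i + b k = ∑ j ∈ ({i, k} : Finset (Fin d)), b j :=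
                  (Finset.sum_pair hik).symm
              _ ≤ ∑ j, b j :=
                  Finset.sum_le_sum_of_subset_of_nonneg (Finset.subset_univ _)
                    fun j _ _ => (hbpos j).le
          nlinarith [sq_nonneg (b i), mul_nonneg hd2 (sq_nonneg S'),
            mul_nonneg (by linarith : (0:ℝ) ≤ S' - b i - b k) hS'pos.le]
      calc b i * (S' - b i) ≤ (((d : ℝ) - 1) * S' - b k) * S' := hstep
        _ ≤ (((d : ℝ) - 1) * S) * S' := mul_le_mul_of_nonneg_right hdS hS'pos.le
        _ = ((d : ℝ) - 1) * (S * S') := by ring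
    have hsplit : S⁻¹ * A₁ - S'⁻¹ * A₂ = (S' * A₁ - S * A₂) / (S * S') := by
      field_simp
    have hexp : S' * A₁ - S * A₂
        = ∑ j, ∑ i, (w j / t' j * (a i / t i) - w j / t j * (a i / t' i)) := by
      rw [hS', hA₁, hS, hA₂, Finset.sum_mul_sum, Finset.sum_mul_sum,
        ← Finset.sum_sub_distrib]
      exact Finset.sum_congr rfl fun j _ => (Finset.sum_sub_distrib _ _).symm
    set Ebd : Fin d → Fin d → ℝ := fun j i =>
      b i * b j * (ε i + ε j) - (if i = j then 2 * b i ^ 2 * ε i else 0) with hEbd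
    have hterm : ∀ j i, |w j / t' j * (a i / t i) - w j / t j * (a i / t' i)| ≤ Ebd j i := by
      intro j i
      rcases eq_or_ne i j with rfl | hij
      · have h0 : w i / t' i * (a i / t i) - w i / t i * (a i / t' i) = 0 := by ring
        have hE0 : b i * b i * (ε i + ε i) - 2 * b i ^ 2 * ε i = 0 := by ring
        rw [h0, abs_zero]
        show (0:ℝ) ≤ b i * b i * (ε i + ε i) - (if i = i then 2 * b i ^ 2 * ε i else 0)
        rw [if_pos rfl]
        linarith [hE0]
      · have hid : w j / t' j * (a i / t i) - w j / t j * (a i / t' i)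
            = (w j / t' j) * (a i / t' i) * (t' i / t i - t' j / t j) := by
          field_simp [(ht i).ne', (ht' i).ne', (ht j).ne', (ht' j).ne']
        rw [hid]
        simp only [hEbd, if_neg hij, sub_zero]
        rw [abs_mul, abs_mul]
        have h1 : |w j / t' j| = b j := by
          rw [abs_div, abs_of_pos (hw j), abs_of_pos (ht' j)]
        have h2 : |a i / t' i| ≤ b i := by
          rw [abs_div, abs_of_pos (ht' i)]
          exact (div_le_div_iff_of_pos_right (ht' i)).mpr (ha i)
        have h3 : |t' i / t i - t' j / t j| ≤ ε i + ε j := by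
          have he : t' i / t i - t' j / t j = (1 - t' j / t j) - (1 - t' i / t i) := by
            ring
          rw [he]
          exact (abs_sub _ _).trans_eq (add_comm _ _)
        calc |w j / t' j| * |a i / t' i| * |t' i / t i - t' j / t j|
            ≤ b j * b i * (ε i + ε j) := by
              apply mul_le_mul
              · exact mul_le_mul (le_of_eq h1) h2 (abs_nonneg _) (hbpos j).le
              · exact h3
              · exact abs_nonneg _
              · exact mul_nonneg (hbpos j).le (hbpos i).le
          _ = b i * b j * (ε i + ε j) := by ring
    set T : ℝ := ∑ i, b i * ε i with hT
    have hEsum : ∑ j, ∑ i, Ebd j i = 2 * ∑ i, ε i * (b i * (S' - b i)) := by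
      have inner : ∀ j, ∑ i, Ebd j i
          = b j * T + b j * ε j * S' - 2 * b j ^ 2 * ε j := by
        intro j
        simp only [hEbd]
        rw [Finset.sum_sub_distrib,
          Finset.sum_ite_eq' Finset.univ j (fun i => 2 * b i ^ 2 * ε i)]
        simp only [Finset.mem_univ, if_true]
        congr 1
        rw [hT, hS'b, Finset.mul_sum, Finset.mul_sum, ← Finset.sum_add_distrib]
        exact Finset.sum_congr rfl fun i _ => by ring
      calc ∑ j, ∑ i, Ebd j i
          = ∑ j, (b j * T + b j * ε j * S' - 2 * b j ^ 2 * ε j) :=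
            Finset.sum_congr rfl fun j _ => inner j
        _ = (∑ j, b j) * T + (∑ j, b j * ε j) * S' - 2 * ∑ j, b j ^ 2 * ε j := by
            rw [Finset.sum_sub_distrib, Finset.sum_add_distrib, Finset.sum_mul,
              Finset.sum_mul, Finset.mul_sum]
            congr 1
            exact Finset.sum_congr rfl fun i _ => by ring
        _ = S' * T + T * S' - 2 * ∑ j, b j ^ 2 * ε j := by rw [← hS'b, ← hT]
        _ = 2 * (∑ i, (b i * ε i * S' - b i ^ 2 * ε i)) := by
            rw [Finset.sum_sub_distrib, ← Finset.sum_mul, ← hT]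
            ring
        _ = 2 * ∑ i, ε i * (b i * (S' - b i)) := by
            congr 1
            exact Finset.sum_congr rfl fun i _ => by ring
    rw [hsplit, abs_div, abs_of_pos (mul_pos hSpos hS'pos),
      div_le_iff₀ (mul_pos hSpos hS'pos)]
    calc |S' * A₁ - S * A₂|
        ≤ ∑ j, ∑ i, Ebd j i := by
          rw [hexp]
          exact (Finset.abs_sum_le_sum_abs _ _).trans <|
            Finset.sum_le_sum fun j _ =>
              (Finset.abs_sum_le_sum_abs _ _).trans <|
                Finset.sum_le_sum fun i _ => hterm j i
      _ = 2 * ∑ i, ε i * (b i * (S' - b i)) := hEsum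
      _ ≤ 2 * ∑ i, ε i * (((d : ℝ) - 1) * (S * S')) := by
          refine mul_le_mul_of_nonneg_left
            (Finset.sum_le_sum fun i _ =>
              mul_le_mul_of_nonneg_left (claim i) (hεnn i)) (by norm_num)
      _ = 2 * ((d : ℝ) - 1) * (∑ i, ε i) * (S * S') := by
          rw [← Finset.sum_mul]
          ring

theorem wang_landau_tv_biased_densities
    {E : Type*} [MeasurableSpace E] [TopologicalSpace E] [PolishSpace E] [BorelSpace E]
    [Nonempty E]
    (d : ℕ) (hd : 2 ≤ d)
    (lam : Measure E) (pdf : E → ℝ) (idx : E → Fin d)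
    (q : E → E → ℝ) (P : (Fin d → ℝ) → Kernel E E)
    -- (A1): `0 < inf π ≤ sup π < ∞` and `min_i θ⋆(i) > 0`, π a probability density
    (hpdf_meas : Measurable pdf)
    (hpdf_prob : ∫ x, pdf x ∂lam = 1)
    (hpdf_inf : 0 < ⨅ x, pdf x)
    (hpdf_sup : BddAbove (Set.range pdf))
    (hidx_meas : Measurable idx)
    (hts_pos : ∀ i, 0 < thetaStarW lam pdf idx i) :
    ∀ t ∈ simplexInt d, ∀ t' ∈ simplexInt d, ∀ f : E → ℝ, Measurable f →
      (∀ x, |f x| ≤ 1) →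
      |∫ x, f x * piB lam pdf idx t x ∂lam - ∫ x, f x * piB lam pdf idx t' x ∂lam|
        ≤ 2 * (d - 1) * ∑ i, |1 - t' i / t i| := by
  intro t htmem t' ht'mem f hf hfb
  have ht : ∀ i, 0 < t i := fun i => (htmem.1 i).1
  have ht' : ∀ i, 0 < t' i := fun i => (ht'mem.1 i).1
  -- pdf is nonnegative
  have hpdf_nn : ∀ x, 0 ≤ pdf x := by
    intro x
    by_contra h
    push_neg at h
    rcases em (BddBelow (Set.range pdf)) with hbdd | hbdd
    · exact absurd (ciInf_le hbdd x) (by linarith [hpdf_inf])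
    · rw [iInf, Real.sInf_of_not_bddBelow hbdd] at hpdf_inf
      exact lt_irrefl _ hpdf_inf
  have hInt : Integrable pdf lam := by
    by_contra h
    rw [integral_undef h] at hpdf_prob
    norm_num at hpdf_prob
  have hfInt : Integrable (fun x => f x * pdf x) lam := by
    refine hInt.mono' ((hf.mul hpdf_meas).aestronglyMeasurable) ?_
    filter_upwards with x
    rw [norm_mul, Real.norm_eq_abs, Real.norm_eq_abs, abs_of_nonneg (hpdf_nn x)]
    calc |f x| * pdf x ≤ 1 * pdf x :=
        mul_le_mul_of_nonneg_right (hfb x) (hpdf_nn x)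
      _ = pdf x := one_mul _
  have hmeasset : ∀ i : Fin d, MeasurableSet (idx ⁻¹' {i}) :=
    fun i => hidx_meas (measurableSet_singleton i)
  -- the integral of f against the biased density, as a finite sum
  have keyInt : ∀ u : Fin d → ℝ, (∀ i, 0 < u i) →
      ∫ x, f x * piB lam pdf idx u x ∂lam
        = (∑ i, thetaStarW lam pdf idx i / u i)⁻¹ *
            ∑ i, (∫ y in idx ⁻¹' {i}, f y * pdf y ∂lam) / u i := by
    intro u hu
    have hpt : ∀ x, f x * piB lam pdf idx u x
        = (∑ i, thetaStarW lam pdf idx i / u i)⁻¹ *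
          ∑ i, (idx ⁻¹' {i}).indicator (fun y => f y * pdf y / u i) x := by
      intro x
      classical
      rw [piB, mul_left_comm]
      congr 1
      rw [Finset.mul_sum]
      apply Finset.sum_congr rfl
      intro i _
      rw [Set.indicator_apply]
      simp only [Set.mem_preimage, Set.mem_singleton_iff]
      by_cases h : idx x = i
      · rw [if_pos h, if_pos h]
        ring
      · rw [if_neg h, if_neg h]
        ring
    calc ∫ x, f x * piB lam pdf idx u x ∂lam
        = ∫ x, (∑ i, thetaStarW lam pdf idx i / u i)⁻¹ *
            ∑ i, (idx ⁻¹' {i}).indicator (fun y => f y * pdf y / u i) x ∂lam :=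
          integral_congr_ae (Filter.Eventually.of_forall hpt)
      _ = (∑ i, thetaStarW lam pdf idx i / u i)⁻¹ *
            ∫ x, ∑ i, (idx ⁻¹' {i}).indicator (fun y => f y * pdf y / u i) x ∂lam := by
          rw [integral_const_mul]
      _ = (∑ i, thetaStarW lam pdf idx i / u i)⁻¹ *
            ∑ i, ∫ x, (idx ⁻¹' {i}).indicator (fun y => f y * pdf y / u i) x ∂lam := by
          rw [integral_finset_sum]
          intro i _
          exact (hfInt.div_const (u i)).indicator (hmeasset i)
      _ = (∑ i, thetaStarW lam pdf idx i / u i)⁻¹ *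
            ∑ i, (∫ y in idx ⁻¹' {i}, f y * pdf y ∂lam) / u i := by
          congr 1
          apply Finset.sum_congr rfl
          intro i _
          rw [integral_indicator (hmeasset i), ← integral_div]
  -- the numerators are dominated by the weights
  have ha : ∀ i, |∫ y in idx ⁻¹' {i}, f y * pdf y ∂lam| ≤ thetaStarW lam pdf idx i := by
    intro i
    rw [thetaStarW]
    have habs : (fun y => |f y| * |pdf y|) = fun y => |f y * pdf y| :=
      funext fun y => (abs_mul _ _).symm
    calc |∫ y in idx ⁻¹' {i}, f y * pdf y ∂lam|
        ≤ ∫ y in idx ⁻¹' {i}, |f y| * |pdf y| ∂lam := by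
          simpa [Real.norm_eq_abs, abs_mul] using
            norm_integral_le_integral_norm (μ := lam.restrict (idx ⁻¹' {i}))
              (fun y => f y * pdf y)
      _ ≤ ∫ y in idx ⁻¹' {i}, pdf y ∂lam := by
          refine integral_mono ?_ hInt.integrableOn ?_
          · rw [habs]
            exact hfInt.abs.integrableOn
          intro x
          dsimp only
          rw [abs_of_nonneg (hpdf_nn x)]
          calc |f x| * pdf x ≤ 1 * pdf x :=
              mul_le_mul_of_nonneg_right (hfb x) (hpdf_nn x)
            _ = pdf x := one_mul _
  rw [keyInt t ht, keyInt t' ht']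
  exact wl_key_alg hd (thetaStarW lam pdf idx)
    (fun i => ∫ y in idx ⁻¹' {i}, f y * pdf y ∂lam) t t' hts_pos ha ht ht'


end
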